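/- If s_1 + s_2 + Σ_{r=1}^m d_r = 0 for integers s_1, s_2, then W(s_1, d^m) = (-1)^{m+1} W(s_2, d^m), where W is the quasi-polynomial extension of the restricted partition number to all integers (i.e., the unique quasi-polynomial agreeing with the partition count on nonnegative integers). -/

import Mathlib

/-- Restricted partition number: number of nonnegative integer solutions of
`∑ i, d i * x i = s`. -/
noncomputable def W {m : ℕ} (d : Fin m → ℕ) (s : ℤ) : ℕ :=
  Nat.card {x : Fin m → ℕ // ∑ i, (d i : ℤ) * (x i : ℤ) = s}

namespace Stmt7Aux

variable {m : ℕ}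

lemma sol_bound {d : Fin m → ℕ} (hd : ∀ i, 0 < d i) {s : ℤ} {x : Fin m → ℕ}
    (hx : ∑ i, (d i : ℤ) * (x i : ℤ) = s) (i : Fin m) : x i < s.toNat + 1 := by
  have h1 : (d i : ℤ) * (x i : ℤ) ≤ s := by
    rw [← hx]
    exact Finset.single_le_sum (f := fun j => (d j : ℤ) * (x j : ℤ))
      (fun j _ => by positivity) (Finset.mem_univ i)
  have h2 : (x i : ℤ) ≤ (d i : ℤ) * (x i : ℤ) :=
    le_mul_of_one_le_left (by positivity) (by exact_mod_cast hd i)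
  have h3 : (x i : ℤ) ≤ s.toNat := (h2.trans h1).trans (Int.self_le_toNat s)
  omega

lemma finite_sol (d : Fin m → ℕ) (hd : ∀ i, 0 < d i) (s : ℤ) :
    Finite {x : Fin m → ℕ // ∑ i, (d i : ℤ) * (x i : ℤ) = s} := by
  apply Finite.of_injective
    (fun x : {x : Fin m → ℕ // ∑ i, (d i : ℤ) * (x i : ℤ) = s} =>
      (fun i => (⟨x.1 i, sol_bound hd x.2 i⟩ : Fin (s.toNat + 1))))
  intro x y hxy
  apply Subtype.ext
  funext i
  have := congrFun hxy i
  simpa using this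

lemma W_neg (d : Fin m → ℕ) {s : ℤ} (hs : s < 0) : W d s = 0 := by
  have : IsEmpty {x : Fin m → ℕ // ∑ i, (d i : ℤ) * (x i : ℤ) = s} := by
    constructor
    intro x
    have : (0:ℤ) ≤ ∑ i, (d i : ℤ) * (x.1 i : ℤ) :=
      Finset.sum_nonneg fun j _ => by positivity
    rw [x.2] at this
    omega
  simp [W, Nat.card_of_isEmpty]

lemma W_zero (d : Fin m → ℕ) (hd : ∀ i, 0 < d i) : W d 0 = 1 := by
  have : Unique {x : Fin m → ℕ // ∑ i, (d i : ℤ) * (x i : ℤ) = (0:ℤ)} := by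
    refine ⟨⟨⟨fun _ => 0, by simp⟩⟩, ?_⟩
    rintro ⟨x, hx⟩
    apply Subtype.ext
    funext i
    have h0 : ∀ j ∈ Finset.univ, (0:ℤ) ≤ (d j : ℤ) * (x j : ℤ) := fun j _ => by positivity
    have := (Finset.sum_eq_zero_iff_of_nonneg h0).1 hx i (Finset.mem_univ i)
    have hdi := hd i
    simp only [mul_eq_zero] at this
    rcases this with h | h
    · exact absurd h (by exact_mod_cast hdi.ne')
    · exact_mod_cast h
  exact Nat.card_unique

noncomputable def NA (d : Fin m → ℕ) (A : Finset (Fin m)) (s : ℤ) : ℕ :=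
  Nat.card {x : Fin m → ℕ // (∀ i ∉ A, x i = 0) ∧ ∑ i, (d i : ℤ) * (x i : ℤ) = s}

lemma finite_NA (d : Fin m → ℕ) (hd : ∀ i, 0 < d i) (A : Finset (Fin m)) (s : ℤ) :
    Finite {x : Fin m → ℕ // (∀ i ∉ A, x i = 0) ∧ ∑ i, (d i : ℤ) * (x i : ℤ) = s} := by
  have := finite_sol d hd s
  exact Finite.of_injective
    (fun x : {x : Fin m → ℕ // (∀ i ∉ A, x i = 0) ∧ ∑ i, (d i : ℤ) * (x i : ℤ) = s} =>
      (⟨x.1, x.2.2⟩ : {x : Fin m → ℕ // ∑ i, (d i : ℤ) * (x i : ℤ) = s}))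
    (by intro x y hxy; injection hxy with h; exact Subtype.ext h)

lemma sum_update (d : Fin m → ℕ) (x : Fin m → ℕ) (a : Fin m) (v : ℕ) :
    ∑ i, (d i : ℤ) * ((Function.update x a v i : ℕ) : ℤ)
      = ∑ i, (d i : ℤ) * (x i : ℤ) - (d a : ℤ) * (x a : ℤ) + (d a : ℤ) * (v : ℤ) := by
  have h1 : (fun i => (d i : ℤ) * ((Function.update x a v i : ℕ) : ℤ))
      = Function.update (fun i => (d i : ℤ) * (x i : ℤ)) a ((d a : ℤ) * (v : ℤ)) := by
    funext i
    rcases eq_or_ne i a with rfl | hne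
    · simp
    · simp [Function.update_of_ne hne]
  rw [h1, Finset.sum_update_of_mem (Finset.mem_univ a)]
  have h2 : ∑ i, (d i : ℤ) * (x i : ℤ)
      = (d a : ℤ) * (x a : ℤ) + ∑ i ∈ Finset.univ.erase a, (d i : ℤ) * (x i : ℤ) :=
    (Finset.add_sum_erase _ _ (Finset.mem_univ a)).symm
  rw [h2, ← Finset.erase_eq]; ring

lemma NA_rec (d : Fin m → ℕ) (hd : ∀ i, 0 < d i) {a : Fin m} {A : Finset (Fin m)}
    (ha : a ∉ A) (s : ℤ) :
    NA d (insert a A) s = NA d (insert a A) (s - (d a : ℤ)) + NA d A s := by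
  classical
  set α := {x : Fin m → ℕ // (∀ i ∉ insert a A, x i = 0) ∧ ∑ i, (d i : ℤ) * (x i : ℤ) = s}
    with hαdef
  set β := {x : Fin m → ℕ // (∀ i ∉ insert a A, x i = 0) ∧
      ∑ i, (d i : ℤ) * (x i : ℤ) = s - (d a : ℤ)} with hβdef
  set γ := {x : Fin m → ℕ // (∀ i ∉ A, x i = 0) ∧ ∑ i, (d i : ℤ) * (x i : ℤ) = s} with hγdef
  have hα : Finite α := finite_NA d hd _ s
  have hβ : Finite β := finite_NA d hd _ _
  have hγ : Finite γ := finite_NA d hd _ _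
  have e2 : {x : α // x.1 a = 0} ≃ γ := by
    refine ⟨fun x => ⟨x.1.1, ?_, x.1.2.2⟩,
      fun y => ⟨⟨y.1, ?_, y.2.2⟩, y.2.1 a ha⟩, fun x => ?_, fun y => ?_⟩
    · intro i hi
      rcases eq_or_ne i a with rfl | hne
      · exact x.2
      · exact x.1.2.1 i (by simp [hne, hi])
    · exact fun i hi => y.2.1 i (fun hiA => hi (Finset.mem_insert_of_mem hiA))
    · exact Subtype.ext (Subtype.ext rfl)
    · exact Subtype.ext rfl
  have e1 : {x : α // ¬ x.1 a = 0} ≃ β := by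
    have Fdef : ∀ x : {x : α // ¬ x.1 a = 0}, (∀ i ∉ insert a A,
        Function.update x.1.1 a (x.1.1 a - 1) i = 0) ∧
        ∑ i, (d i : ℤ) * ((Function.update x.1.1 a (x.1.1 a - 1) i : ℕ) : ℤ)
          = s - (d a : ℤ) := by
      intro x
      constructor
      · intro i hi
        have hne : i ≠ a := fun he => hi (he ▸ Finset.mem_insert_self a A)
        rw [Function.update_of_ne hne]
        exact x.1.2.1 i hi
      · rw [sum_update, x.1.2.2]
        have hxa : 1 ≤ x.1.1 a := Nat.one_le_iff_ne_zero.2 x.2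
        have hc : ((x.1.1 a - 1 : ℕ) : ℤ) = (x.1.1 a : ℤ) - 1 := by omega
        rw [hc]; ring
    have Gdef : ∀ y : β, ((∀ i ∉ insert a A, Function.update y.1 a (y.1 a + 1) i = 0) ∧
        ∑ i, (d i : ℤ) * ((Function.update y.1 a (y.1 a + 1) i : ℕ) : ℤ) = s) := by
      intro y
      constructor
      · intro i hi
        have hne : i ≠ a := fun he => hi (he ▸ Finset.mem_insert_self a A)
        rw [Function.update_of_ne hne]
        exact y.2.1 i hi
      · rw [sum_update, y.2.2]; push_cast; ring
    refine ⟨fun x => ⟨Function.update x.1.1 a (x.1.1 a - 1), Fdef x⟩,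
      fun y => ⟨⟨Function.update y.1 a (y.1 a + 1), Gdef y⟩, by simp⟩,
      fun x => ?_, fun y => ?_⟩
    · apply Subtype.ext; apply Subtype.ext
      show Function.update (Function.update x.1.1 a (x.1.1 a - 1)) a
          (Function.update x.1.1 a (x.1.1 a - 1) a + 1) = x.1.1
      have hxa : 1 ≤ x.1.1 a := Nat.one_le_iff_ne_zero.2 x.2
      funext i
      rcases eq_or_ne i a with rfl | hne
      · simp only [Function.update_self]; omega
      · simp [Function.update_of_ne hne]
    · apply Subtype.ext
      show Function.update (Function.update y.1 a (y.1 a + 1)) a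
          (Function.update y.1 a (y.1 a + 1) a - 1) = y.1
      funext i
      rcases eq_or_ne i a with rfl | hne
      · simp only [Function.update_self]; omega
      · simp [Function.update_of_ne hne]
  have etot : α ≃ β ⊕ γ :=
    (Equiv.sumCompl (fun x : α => x.1 a = 0)).symm.trans
      ((Equiv.sumComm _ _).trans (Equiv.sumCongr e1 e2))
  have : Nat.card α = Nat.card β + Nat.card γ := by
    rw [Nat.card_congr etot, Nat.card_sum]
  exact this

lemma NA_empty (d : Fin m → ℕ) (s : ℤ) :
    (NA d ∅ s : ℚ) = if s = 0 then 1 else 0 := by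
  rcases eq_or_ne s 0 with rfl | hs
  · have : Unique {x : Fin m → ℕ // (∀ i ∉ (∅:Finset (Fin m)), x i = 0) ∧
        ∑ i, (d i : ℤ) * (x i : ℤ) = (0:ℤ)} := by
      refine ⟨⟨⟨fun _ => 0, fun i _ => rfl, by simp⟩⟩, ?_⟩
      rintro ⟨x, hx1, hx2⟩
      apply Subtype.ext
      funext i
      exact hx1 i (Finset.notMem_empty i)
    rw [NA, Nat.card_unique, Nat.cast_one, if_pos rfl]
  · rw [if_neg hs]
    have : IsEmpty {x : Fin m → ℕ // (∀ i ∉ (∅:Finset (Fin m)), x i = 0) ∧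
        ∑ i, (d i : ℤ) * (x i : ℤ) = s} := by
      constructor
      rintro ⟨x, hx1, hx2⟩
      apply hs
      rw [← hx2]
      apply Finset.sum_eq_zero
      intro i _
      rw [hx1 i (Finset.notMem_empty i)]
      simp
    rw [NA, Nat.card_of_isEmpty, Nat.cast_zero]

lemma NA_univ (d : Fin m → ℕ) (s : ℤ) : NA d Finset.univ s = W d s := by
  apply Nat.card_congr
  apply Equiv.subtypeEquivRight
  intro x
  simp

lemma key (d : Fin m → ℕ) (hd : ∀ i, 0 < d i) (A : Finset (Fin m)) : ∀ s : ℤ,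
    ∑ S ∈ A.powerset, (-1:ℚ)^S.card * (NA d A (s - ∑ i ∈ S, (d i : ℤ)) : ℚ)
      = if s = 0 then 1 else 0 := by
  classical
  induction A using Finset.induction_on with
  | empty =>
    intro s
    simp only [Finset.powerset_empty, Finset.sum_singleton, Finset.card_empty, pow_zero,
      Finset.sum_empty, sub_zero, one_mul]
    exact NA_empty d s
  | @insert a A ha ih =>
    intro s
    rw [Finset.sum_powerset_insert ha]
    have hstep : ∀ S ∈ A.powerset,
        (-1:ℚ)^S.card * (NA d (insert a A) (s - ∑ i ∈ S, (d i : ℤ)) : ℚ)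
          + (-1:ℚ)^(insert a S).card *
            (NA d (insert a A) (s - ∑ i ∈ insert a S, (d i : ℤ)) : ℚ)
        = (-1:ℚ)^S.card * (NA d A (s - ∑ i ∈ S, (d i : ℤ)) : ℚ) := by
      intro S hS
      have haS : a ∉ S := fun h => ha (Finset.mem_powerset.1 hS h)
      rw [Finset.card_insert_of_notMem haS, Finset.sum_insert haS, pow_succ]
      have hrec := NA_rec d hd ha (s - ∑ i ∈ S, (d i : ℤ))
      have harg : s - ((d a : ℤ) + ∑ i ∈ S, (d i : ℤ))
          = (s - ∑ i ∈ S, (d i : ℤ)) - (d a : ℤ) := by ring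
      rw [harg, hrec]
      push_cast
      ring
    rw [← Finset.sum_add_distrib, Finset.sum_congr rfl hstep]
    exact ih s

lemma vanish (T : ℤ) (hT : 0 < T) (g : ℤ → ℚ)
    (hg : ∀ s : ℤ, ∃ p : Polynomial ℚ, ∀ t : ℤ, g (s + t * T) = p.eval (t : ℚ))
    (B : ℤ) (h0 : ∀ s, B ≤ s → g s = 0) : ∀ s, g s = 0 := by
  intro s
  obtain ⟨p, hp⟩ := hg s
  have hp0 : p = 0 := by
    apply Polynomial.eq_zero_of_infinite_isRoot
    apply Set.infinite_of_injective_forall_mem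
      (f := fun n : ℕ => ((B.natAbs + s.natAbs + n : ℕ) : ℚ))
    case hi =>
      intro a b hab
      simp only [Nat.cast_inj] at hab
      omega
    case hf =>
      intro n
      set k : ℕ := B.natAbs + s.natAbs + n with hk
      have h1 : g (s + (k : ℤ) * T) = 0 := by
        apply h0
        have h2 : (k : ℤ) ≤ (k : ℤ) * T := le_mul_of_one_le_right (by positivity) (by omega)
        have h3 : B ≤ s + (k : ℤ) := by
          have := Int.le_natAbs (a := B)
          have := Int.le_natAbs (a := -s)
          omega
        omega
      have := hp (k : ℤ)
      rw [h1] at this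
      show p.IsRoot _
      rw [Polynomial.IsRoot]
      push_cast at this ⊢
      exact this.symm
  have := hp 0
  rw [hp0] at this
  simpa using this

end Stmt7Aux

/-- Reciprocity for the quasi-polynomial extension of the restricted partition number:
if `f : ℤ → ℚ` is a quasi-polynomial with period `lcm d` agreeing with `W d` on the
nonnegative integers, then `s₁ + s₂ + ∑ d = 0` implies `f s₁ = (-1)^(m+1) f s₂`. -/
theorem stmt7 {m : ℕ} (hm : 1 ≤ m) (d : Fin m → ℕ) (hd : ∀ i, 0 < d i)
    (f : ℤ → ℚ)
    (hagree : ∀ s : ℤ, 0 ≤ s → f s = W d s)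
    (c : Fin m → ℤ → ℚ)
    (hper : ∀ j s, c j (s + (((Finset.univ : Finset (Fin m)).lcm d : ℕ) : ℤ)) = c j s)
    (hpoly : ∀ s, f s = ∑ j, c j s * (s : ℚ) ^ (j : ℕ))
    (s₁ s₂ : ℤ) (h : s₁ + s₂ + ∑ i, (d i : ℤ) = 0) :
    f s₁ = (-1) ^ (m + 1) * f s₂ := by
  classical
  open Stmt7Aux in
  set T : ℤ := (((Finset.univ : Finset (Fin m)).lcm d : ℕ) : ℤ) with hTdef
  set D : ℤ := ∑ i, (d i : ℤ) with hDdef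
  -- positivity of T
  have hT1 : 0 < T := by
    have hne : ((Finset.univ : Finset (Fin m)).lcm d) ≠ 0 := by
      rw [Ne, Finset.lcm_eq_zero_iff]
      rintro ⟨i, _, hi⟩
      exact absurd hi (hd i).ne'
    rw [hTdef]
    exact_mod_cast Nat.pos_of_ne_zero hne
  have hD1 : 1 ≤ D := by
    rw [hDdef]
    have i0 : Fin m := ⟨0, hm⟩
    calc (1:ℤ) ≤ (d i0 : ℤ) := by exact_mod_cast hd i0
    _ ≤ ∑ i, (d i : ℤ) := Finset.single_le_sum (f := fun j => (d j : ℤ))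
        (fun j _ => by positivity) (Finset.mem_univ i0)
  -- basic facts about subset sums
  have hdS0 : ∀ S : Finset (Fin m), 0 ≤ ∑ i ∈ S, (d i : ℤ) :=
    fun S => Finset.sum_nonneg fun j _ => by positivity
  have hdSD : ∀ S : Finset (Fin m), ∑ i ∈ S, (d i : ℤ) ≤ D := by
    intro S
    rw [hDdef]
    exact Finset.sum_le_sum_of_subset_of_nonneg (Finset.subset_univ S)
      (fun j _ _ => by positivity)
  have hcompl : ∀ S : Finset (Fin m),
      ∑ i ∈ S, (d i : ℤ) + ∑ i ∈ Sᶜ, (d i : ℤ) = D := by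
    intro S
    rw [hDdef]
    exact Finset.sum_add_sum_compl S _
  have hdS1 : ∀ S : Finset (Fin m), S.Nonempty → 1 ≤ ∑ i ∈ S, (d i : ℤ) := by
    rintro S ⟨i, hi⟩
    calc (1:ℤ) ≤ (d i : ℤ) := by exact_mod_cast hd i
    _ ≤ ∑ i ∈ S, (d i : ℤ) := Finset.single_le_sum (f := fun j => (d j : ℤ))
        (fun j _ => by positivity) hi
  have hproper : ∀ S : Finset (Fin m), S ≠ Finset.univ → ∑ i ∈ S, (d i : ℤ) ≤ D - 1 := by
    intro S hS
    have hne : Sᶜ.Nonempty := by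
      rw [Finset.nonempty_iff_ne_empty]
      intro hc
      apply hS
      have := congrArg (fun t : Finset (Fin m) => tᶜ) hc
      simpa using this
    have := hdS1 Sᶜ hne
    have := hcompl S
    omega
  have hcardm : (Finset.univ : Finset (Fin m)).card = m := by simp
  -- periodicity in both directions
  have hcper : ∀ (j : Fin m) (s t : ℤ), c j (s + t * T) = c j s := by
    intro j s t
    induction t using Int.induction_on with
    | zero => simp
    | succ i ih =>
      have h1 := hper j (s + (i:ℤ) * T)
      rw [show s + ((i:ℤ)+1) * T = s + (i:ℤ) * T + T by ring, h1, ih]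
    | pred i ih =>
      have h1 := hper j (s + (-(i:ℤ)-1) * T)
      rw [show s + (-(i:ℤ)-1) * T + T = s + (-(i:ℤ)) * T by ring] at h1
      rw [← h1, ih]
  -- polynomial representation of f along arithmetic progressions
  have PRf : ∀ s : ℤ, ∃ p : Polynomial ℚ, ∀ t : ℤ, f (s + t * T) = p.eval (t : ℚ) := by
    intro s
    refine ⟨∑ j, Polynomial.C (c j s) *
      (Polynomial.C (s:ℚ) + Polynomial.C (T:ℚ) * Polynomial.X)^(j:ℕ), ?_⟩
    intro t
    rw [hpoly (s + t * T), Polynomial.eval_finset_sum]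
    apply Finset.sum_congr rfl
    intro j _
    rw [hcper j s t]
    simp only [Polynomial.eval_mul, Polynomial.eval_pow, Polynomial.eval_add,
      Polynomial.eval_C, Polynomial.eval_X]
    push_cast
    ring
  choose Pf hPf using PRf
  -- the fundamental recurrence for f
  have star_f : ∀ s : ℤ, ∑ S ∈ (Finset.univ : Finset (Fin m)).powerset,
      (-1:ℚ)^S.card * f (s - ∑ i ∈ S, (d i : ℤ)) = 0 := by
    apply Stmt7Aux.vanish T hT1 _ ?_ D
    · intro s hs
      have h1 : ∀ S ∈ (Finset.univ : Finset (Fin m)).powerset,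
          (-1:ℚ)^S.card * f (s - ∑ i ∈ S, (d i : ℤ))
            = (-1:ℚ)^S.card * (Stmt7Aux.NA d Finset.univ (s - ∑ i ∈ S, (d i : ℤ)) : ℚ) := by
        intro S _
        rw [hagree _ (by have := hdSD S; omega), Stmt7Aux.NA_univ]
      rw [Finset.sum_congr rfl h1, Stmt7Aux.key d hd Finset.univ s, if_neg (by omega)]
    · intro s
      refine ⟨∑ S ∈ (Finset.univ : Finset (Fin m)).powerset,
        Polynomial.C ((-1:ℚ)^S.card) * Pf (s - ∑ i ∈ S, (d i : ℤ)), ?_⟩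
      intro t
      rw [Polynomial.eval_finset_sum]
      apply Finset.sum_congr rfl
      intro S _
      rw [show s + t * T - ∑ i ∈ S, (d i : ℤ) = (s - ∑ i ∈ S, (d i : ℤ)) + t * T by ring,
        hPf (s - ∑ i ∈ S, (d i : ℤ)) t]
      simp [Polynomial.eval_mul]
  -- the recurrence for N := W
  have star_N : ∀ s : ℤ, ∑ S ∈ (Finset.univ : Finset (Fin m)).powerset,
      (-1:ℚ)^S.card * (W d (s - ∑ i ∈ S, (d i : ℤ)) : ℚ) = if s = 0 then 1 else 0 := by
    intro s
    have h1 : ∀ S ∈ (Finset.univ : Finset (Fin m)).powerset,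
        (-1:ℚ)^S.card * (W d (s - ∑ i ∈ S, (d i : ℤ)) : ℚ)
          = (-1:ℚ)^S.card * (Stmt7Aux.NA d Finset.univ (s - ∑ i ∈ S, (d i : ℤ)) : ℚ) := by
      intro S _
      rw [Stmt7Aux.NA_univ]
    rw [Finset.sum_congr rfl h1, Stmt7Aux.key d hd Finset.univ s]
  -- power facts
  have hpowc : ∀ cnt : ℕ, cnt ≤ m →
      (-1:ℚ)^(m - cnt) * (-1:ℚ)^(m+1) = -(-1:ℚ)^cnt := by
    intro cnt hcnt
    have h2 : (-1:ℚ)^(m-cnt) * (-1:ℚ)^(m+1) * (-1:ℚ)^cnt = -1 := by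
      rw [← pow_add, ← pow_add]
      exact Odd.neg_one_pow ⟨m, by omega⟩
    have h3 : (-1:ℚ)^cnt * (-1:ℚ)^cnt = 1 := by
      rw [← pow_add]
      exact Even.neg_one_pow ⟨cnt, rfl⟩
    linear_combination ((-1:ℚ)^cnt) * h2 - ((-1:ℚ)^(m-cnt) * (-1:ℚ)^(m+1)) * h3
  have hm2 : (-1:ℚ)^(m+1) * (-1:ℚ)^(m+1) = 1 := by
    rw [← pow_add]
    exact Even.neg_one_pow ⟨m+1, rfl⟩
  have hm3 : (-1:ℚ)^m * (-1:ℚ)^m = 1 := by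
    rw [← pow_add]
    exact Even.neg_one_pow ⟨m, rfl⟩
  -- the reflected function
  set g : ℤ → ℚ := fun s => (-1:ℚ)^(m+1) * f (-s - D) with hgdef
  -- recurrence for g
  have star_g : ∀ s : ℤ, ∑ S ∈ (Finset.univ : Finset (Fin m)).powerset,
      (-1:ℚ)^S.card * g (s - ∑ i ∈ S, (d i : ℤ)) = 0 := by
    intro s
    rw [Finset.powerset_univ]
    have ecompl : (Finset (Fin m)) ≃ (Finset (Fin m)) :=
      ⟨fun S => Sᶜ, fun S => Sᶜ, fun S => compl_compl S, fun S => compl_compl S⟩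
    have h1 : ∑ S : Finset (Fin m), (-1:ℚ)^S.card * g (s - ∑ i ∈ S, (d i : ℤ))
        = ∑ S : Finset (Fin m), (-1:ℚ)^(Sᶜ).card * g (s - ∑ i ∈ Sᶜ, (d i : ℤ)) := by
      apply Fintype.sum_equiv ⟨fun S => Sᶜ, fun S => Sᶜ,
        fun S => compl_compl S, fun S => compl_compl S⟩
      intro S
      simp only [Equiv.coe_fn_mk, compl_compl]
    rw [h1]
    have h2 : ∀ S : Finset (Fin m),
        (-1:ℚ)^(Sᶜ).card * g (s - ∑ i ∈ Sᶜ, (d i : ℤ))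
          = -((-1:ℚ)^S.card * f ((-s) - ∑ i ∈ S, (d i : ℤ))) := by
      intro S
      have hc : (Sᶜ).card = m - S.card := by
        rw [Finset.card_compl, Fintype.card_fin]
      have harg : -(s - ∑ i ∈ Sᶜ, (d i : ℤ)) - D = (-s) - ∑ i ∈ S, (d i : ℤ) := by
        have := hcompl S
        omega
      rw [hc, hgdef]
      simp only []
      rw [harg]
      have := hpowc S.card (by
        have := Finset.card_le_card (Finset.subset_univ S)
        omega)
      calc (-1:ℚ)^(m - S.card) * ((-1:ℚ)^(m+1) * f ((-s) - ∑ i ∈ S, (d i : ℤ)))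
          = ((-1:ℚ)^(m - S.card) * (-1:ℚ)^(m+1)) * f ((-s) - ∑ i ∈ S, (d i : ℤ)) := by ring
        _ = -((-1:ℚ)^S.card * f ((-s) - ∑ i ∈ S, (d i : ℤ))) := by rw [this]; ring
    rw [Finset.sum_congr rfl (fun S _ => h2 S), Finset.sum_neg_distrib]
    have := star_f (-s)
    rw [Finset.powerset_univ] at this
    rw [this, neg_zero]
  -- f vanishes on (-D, 0)
  have F4 : ∀ k : ℕ, 1 ≤ k → (k:ℤ) ≤ D - 1 → f (-(k:ℤ)) = 0 := by
    intro k
    induction k using Nat.strong_induction_on with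
    | _ k ih =>
      intro hk1 hk2
      set s : ℤ := D - (k : ℤ) with hsdef
      have hs1 : 1 ≤ s := by omega
      have hsub : ∑ S ∈ (Finset.univ : Finset (Fin m)).powerset,
          (-1:ℚ)^S.card * (f (s - ∑ i ∈ S, (d i : ℤ)) - (W d (s - ∑ i ∈ S, (d i : ℤ)) : ℚ))
            = 0 := by
        simp only [mul_sub]
        rw [Finset.sum_sub_distrib, star_f s, star_N s, if_neg (by omega)]
        ring
      have hterm : ∀ S ∈ (Finset.univ : Finset (Fin m)).powerset,
          (-1:ℚ)^S.card * (f (s - ∑ i ∈ S, (d i : ℤ)) - (W d (s - ∑ i ∈ S, (d i : ℤ)) : ℚ))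
            = if S = Finset.univ then (-1:ℚ)^m * f (-(k:ℤ)) else 0 := by
        intro S _
        rcases eq_or_ne S Finset.univ with rfl | hSne
        · rw [if_pos rfl, hcardm]
          have harg : s - ∑ i ∈ Finset.univ, (d i : ℤ) = -(k:ℤ) := by
            rw [← hDdef]; omega
          rw [harg, W_neg d (by omega), Nat.cast_zero, sub_zero]
        · rw [if_neg hSne]
          rcases le_or_gt (∑ i ∈ S, (d i : ℤ)) s with hle | hgt
          · rw [hagree _ (by omega)]
            ring
          · have hW : W d (s - ∑ i ∈ S, (d i : ℤ)) = 0 := W_neg d (by omega)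
            have hf : f (s - ∑ i ∈ S, (d i : ℤ)) = 0 := by
              set k' : ℕ := (∑ i ∈ S, (d i : ℤ) - s).toNat with hk'def
              have hk'1 : 1 ≤ k' := by omega
              have hk'2 : (k':ℤ) ≤ D - 1 := by
                have := hproper S hSne
                omega
              have hk'lt : k' < k := by
                have := hproper S hSne
                omega
              have harg : s - ∑ i ∈ S, (d i : ℤ) = -(k':ℤ) := by omega
              rw [harg]
              exact ih k' hk'lt hk'1 hk'2
            rw [hW, hf, Nat.cast_zero, sub_zero, mul_zero]
      rw [Finset.sum_congr rfl hterm, Finset.sum_ite_eq'] at hsub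
      rw [if_pos (Finset.mem_powerset_self _)] at hsub
      have hne : (-1:ℚ)^m ≠ 0 := pow_ne_zero _ (by norm_num)
      exact (mul_eq_zero.1 hsub).resolve_left hne
  -- value at -D
  have F5 : f (-D) = (-1:ℚ)^(m+1) := by
    have hsub : ∑ S ∈ (Finset.univ : Finset (Fin m)).powerset,
        (-1:ℚ)^S.card * (f (0 - ∑ i ∈ S, (d i : ℤ)) - (W d (0 - ∑ i ∈ S, (d i : ℤ)) : ℚ))
          = -1 := by
      simp only [mul_sub]
      rw [Finset.sum_sub_distrib, star_f 0, star_N 0, if_pos rfl]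
      ring
    have hterm : ∀ S ∈ (Finset.univ : Finset (Fin m)).powerset,
        (-1:ℚ)^S.card * (f (0 - ∑ i ∈ S, (d i : ℤ)) - (W d (0 - ∑ i ∈ S, (d i : ℤ)) : ℚ))
          = if S = Finset.univ then (-1:ℚ)^m * f (-D) else 0 := by
      intro S _
      rcases eq_or_ne S Finset.univ with rfl | hSne
      · rw [if_pos rfl, hcardm]
        have harg : (0:ℤ) - ∑ i ∈ Finset.univ, (d i : ℤ) = -D := by rw [← hDdef]; ring
        rw [harg, W_neg d (by omega), Nat.cast_zero, sub_zero]
      · rw [if_neg hSne]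
        rcases Finset.eq_empty_or_nonempty S with rfl | hSne2
        · simp only [Finset.sum_empty, sub_zero]
          rw [hagree 0 le_rfl]
          norm_num
        · have h1 : 1 ≤ ∑ i ∈ S, (d i : ℤ) := hdS1 S hSne2
          have h2 : ∑ i ∈ S, (d i : ℤ) ≤ D - 1 := hproper S hSne
          have hW : W d (0 - ∑ i ∈ S, (d i : ℤ)) = 0 := W_neg d (by omega)
          have hf : f (0 - ∑ i ∈ S, (d i : ℤ)) = 0 := by
            set k' : ℕ := (∑ i ∈ S, (d i : ℤ)).toNat with hk'def
            have harg : (0:ℤ) - ∑ i ∈ S, (d i : ℤ) = -(k':ℤ) := by omega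
            rw [harg]
            exact F4 k' (by omega) (by omega)
          rw [hW, hf, Nat.cast_zero, sub_zero, mul_zero]
    rw [Finset.sum_congr rfl hterm, Finset.sum_ite_eq',
      if_pos (Finset.mem_powerset_self _)] at hsub
    -- (-1)^m * f(-D) = -1
    have : f (-D) = -(-1:ℚ)^m := by
      have h4 : (-1:ℚ)^m * ((-1:ℚ)^m * f (-D)) = (-1:ℚ)^m * (-1) := by rw [hsub]
      rw [← mul_assoc, hm3, one_mul] at h4
      rw [h4]; ring
    rw [this, pow_succ]
    ring
  -- f and g agree on [-D, 0]
  have F6 : ∀ s : ℤ, -D ≤ s → s ≤ 0 → f s = g s := by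
    intro s hs1 hs2
    rcases eq_or_ne s 0 with rfl | hs0
    · have hg0 : g 0 = (-1:ℚ)^(m+1) * f (-0 - D) := rfl
      rw [hg0, show (-0 - D : ℤ) = -D by ring, F5, hm2, hagree 0 le_rfl, W_zero d hd,
        Nat.cast_one]
    rcases eq_or_ne s (-D) with rfl | hsD
    · rw [hgdef]
      simp only []
      rw [show -(-D) - D = (0:ℤ) by ring, hagree 0 le_rfl, W_zero d hd, F5, Nat.cast_one,
        mul_one]
    · -- -D < s < 0
      have hf : f s = 0 := by
        set k : ℕ := (-s).toNat with hkdef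
        have harg : s = -(k:ℤ) := by omega
        rw [harg]
        exact F4 k (by omega) (by omega)
      have hg0 : f (-s - D) = 0 := by
        set k : ℕ := (s + D).toNat with hkdef
        have harg : -s - D = -(k:ℤ) := by omega
        rw [harg]
        exact F4 k (by omega) (by omega)
      rw [hf, hgdef]
      simp only []
      rw [hg0, mul_zero]
  -- f = g everywhere, by two-sided induction
  have F7 : ∀ n : ℕ, ∀ s : ℤ, -D - (n:ℤ) ≤ s → s ≤ (n:ℤ) → f s = g s := by
    intro n
    induction n with
    | zero =>
      intro s hs1 hs2
      exact F6 s (by omega) (by omega)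
    | succ n ihn =>
      intro s hs1 hs2
      rcases le_or_gt s (n:ℤ) with hsn | hsn
      · rcases le_or_gt (-D - (n:ℤ)) s with hsn2 | hsn2
        · exact ihn s hsn2 hsn
        · -- s = -D - (n+1)
          have hseq : s = -D - ((n:ℤ)+1) := by omega
          have hstar : ∑ S ∈ (Finset.univ : Finset (Fin m)).powerset,
              (-1:ℚ)^S.card * ((f (s + D - ∑ i ∈ S, (d i : ℤ)))
                - g (s + D - ∑ i ∈ S, (d i : ℤ))) = 0 := by
            simp only [mul_sub]
            rw [Finset.sum_sub_distrib]
            have h1 := star_f (s + D)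
            have h2 := star_g (s + D)
            rw [h1, h2]; ring
          have hterm : ∀ S ∈ (Finset.univ : Finset (Fin m)).powerset,
              (-1:ℚ)^S.card * ((f (s + D - ∑ i ∈ S, (d i : ℤ)))
                - g (s + D - ∑ i ∈ S, (d i : ℤ)))
              = if S = Finset.univ then (-1:ℚ)^m * (f s - g s) else 0 := by
            intro S _
            rcases eq_or_ne S Finset.univ with rfl | hSne
            · rw [if_pos rfl, hcardm]
              have harg : s + D - ∑ i ∈ Finset.univ, (d i : ℤ) = s := by
                rw [← hDdef]; ring
              rw [harg]
            · rw [if_neg hSne]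
              have h1 : ∑ i ∈ S, (d i : ℤ) ≤ D - 1 := hproper S hSne
              have h2 : 0 ≤ ∑ i ∈ S, (d i : ℤ) := hdS0 S
              have heq : f (s + D - ∑ i ∈ S, (d i : ℤ)) = g (s + D - ∑ i ∈ S, (d i : ℤ)) :=
                ihn _ (by omega) (by omega)
              rw [heq, sub_self, mul_zero]
          rw [Finset.sum_congr rfl hterm, Finset.sum_ite_eq',
            if_pos (Finset.mem_powerset_self _)] at hstar
          have hne : (-1:ℚ)^m ≠ 0 := pow_ne_zero _ (by norm_num)
          have := (mul_eq_zero.1 hstar).resolve_left hne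
          linarith [this]
      · -- s = n+1
        have hseq : s = (n:ℤ) + 1 := by omega
        have hstar : ∑ S ∈ (Finset.univ : Finset (Fin m)).powerset,
            (-1:ℚ)^S.card * ((f (s - ∑ i ∈ S, (d i : ℤ)))
              - g (s - ∑ i ∈ S, (d i : ℤ))) = 0 := by
          simp only [mul_sub]
          rw [Finset.sum_sub_distrib]
          have h1 := star_f s
          have h2 := star_g s
          rw [h1, h2]; ring
        have hterm : ∀ S ∈ (Finset.univ : Finset (Fin m)).powerset,
            (-1:ℚ)^S.card * ((f (s - ∑ i ∈ S, (d i : ℤ)))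
              - g (s - ∑ i ∈ S, (d i : ℤ)))
            = if S = (∅ : Finset (Fin m)) then f s - g s else 0 := by
          intro S _
          rcases eq_or_ne S ∅ with rfl | hSne
          · simp
          · rw [if_neg hSne]
            have hSne2 : S.Nonempty := Finset.nonempty_iff_ne_empty.2 hSne
            have h1 : 1 ≤ ∑ i ∈ S, (d i : ℤ) := hdS1 S hSne2
            have h2 : ∑ i ∈ S, (d i : ℤ) ≤ D := hdSD S
            have heq : f (s - ∑ i ∈ S, (d i : ℤ)) = g (s - ∑ i ∈ S, (d i : ℤ)) :=
              ihn _ (by omega) (by omega)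
            rw [heq, sub_self, mul_zero]
        rw [Finset.sum_congr rfl hterm, Finset.sum_ite_eq',
          if_pos (Finset.empty_mem_powerset _)] at hstar
        linarith [hstar]
  -- conclude
  have hfin : f s₁ = g s₁ := by
    apply F7 s₁.natAbs
    · have := Int.le_natAbs (a := -s₁)
      omega
    · exact Int.le_natAbs
  have harg : -s₁ - D = s₂ := by omega
  rw [hfin]
  show (-1:ℚ)^(m+1) * f (-s₁ - D) = (-1)^(m+1) * f s₂
  rw [harg]
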